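/- arXiv:2507.08293 — 4 statements merged into one kernel-verified Lean document; each statement's English description precedes it below -/
import Mathlib

section
/- For every integer k, the parallelogram in the delay–Doppler plane ℝ² spanned by the vectors u = (Δt, 2·c̃₁·Δt) and v_k = (T_SC + k·Δt, 2·c̃₁·k·Δt) has area exactly 1; that is, |det M| = 1 where M is the 2×2 matrix with columns u and v_k. (This is the statement that every unambiguity parallelogram formed by four adjacent pulses of the AAF of an AFDM chirp subcarrier has unit area.) -/
open Complex Real

noncomputable section

namespace AFDM

variable (N C : ℕ) (Δt : ℝ)

/-- Frame duration `T = N·Δt`. -/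
def T : ℝ := N * Δt

/-- Chirp rate parameter `c̃₁ = C/(2·T·Δt)`. -/
def ctil : ℝ := C / (2 * T N Δt * Δt)

/-- Subchirp duration `T_SC = T/C`. -/
def TSC : ℝ := T N Δt / C

/-- Every unambiguity parallelogram formed by four adjacent pulses of the AAF of an AFDM
chirp subcarrier has unit area: for every integer `k`, the parallelogram spanned by
`u = (Δt, 2·c̃₁·Δt)` and `v_k = (T_SC + k·Δt, 2·c̃₁·k·Δt)` has `|det M| = 1`. -/
theorem unambiguity_parallelogram_area
    (N C : ℕ) (hN : 0 < N) (hNeven : Even N) (hC : 0 < C)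
    (Δt : ℝ) (hΔt : 0 < Δt) (k : ℤ) :
    |Matrix.det !![Δt, TSC N C Δt + (k : ℝ) * Δt;
                   2 * ctil N C Δt * Δt, 2 * ctil N C Δt * ((k : ℝ) * Δt)]| = 1 := by
  have hN' : (N : ℝ) ≠ 0 := Nat.cast_ne_zero.mpr hN.ne'
  have hC' : (C : ℝ) ≠ 0 := Nat.cast_ne_zero.mpr hC.ne'
  have hΔ : Δt ≠ 0 := hΔt.ne'
  have : Matrix.det !![Δt, TSC N C Δt + (k : ℝ) * Δt;
                   2 * ctil N C Δt * Δt, 2 * ctil N C Δt * ((k : ℝ) * Δt)] = -1 := by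
    simp only [Matrix.det_fin_two_of, TSC, ctil, T]
    field_simp
    ring
  rw [this]; norm_num
end AFDM
end
end

section
/- For every m ∈ {0,…,N−1} and every n ∈ {0,…,N−1}, the continuous-time AFDM chirp subcarrier satisfies φ_m(n·Δt) = exp(2πi(c₂·m² + c₁·n² + m·n/N)), where c₁ = C/(2N); that is, sampling φ_m(t) at the Nyquist interval Δt recovers the discrete-time chirp subcarrier φ_m[n]. -/
open MeasureTheory Complex Real

noncomputable section

namespace AFDM

variable (N C : ℕ) (Δt : ℝ)

/-- Spectrum wrapping points `t_{m,q}`: `t_{m,0} = 0`, `t_{m,q} = q·T/C − m·Δt/C` for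
`q = 1,…,C`, and `t_{m,C+1} = T`. -/
def tp (m q : ℕ) : ℝ :=
  if q = 0 then 0 else if q ≤ C then q * T N Δt / C - m * Δt / C else T N Δt

/-- Wrapping index function `q_m(t)`: equals `q` on `[t_{m,q}, t_{m,q+1})` for `t ∈ [0,T)`. -/
def qm (m : ℕ) (t : ℝ) : ℤ :=
  (((Finset.range (C + 1)).filter (fun q => tp N C Δt m q ≤ t)).card : ℤ) - 1

/-- The `m`-th continuous-time AFDM chirp subcarrier with parameter `c₂`:
`φ_m(t) = exp(2πi(c₂·m² + c̃₁·t² + (m/T)·t − q_m(t)·t/Δt))` on `[0,T)`, `0` otherwise. -/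
def phi (c₂ : ℝ) (m : ℕ) (t : ℝ) : ℂ :=
  if 0 ≤ t ∧ t < T N Δt then
    Complex.exp (2 * Real.pi * Complex.I *
      ((c₂ * (m : ℝ) ^ 2 + ctil N C Δt * t ^ 2 + ((m : ℝ) / T N Δt) * t
        - (qm N C Δt m t : ℝ) * t / Δt : ℝ) : ℂ))
  else 0

/-- The aperiodic ambiguity function `A_{a,b}(τ,ν) = ∫ a(t)·conj(b(t−τ))·exp(−2πiνt) dt`. -/
def AF (a b : ℝ → ℂ) (τ ν : ℝ) : ℂ :=
  ∫ t : ℝ, a t * (starRingEnd ℂ) (b (t - τ)) *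
    Complex.exp (-(2 * Real.pi * Complex.I * ((ν * t : ℝ) : ℂ)))

/-- The integral indicator `I(c, t₁, t₂)`. -/
def Iind (c t₁ t₂ : ℝ) : ℂ :=
  if c ≠ 0 then
    (Complex.exp (2 * Real.pi * Complex.I * ((c * t₂ : ℝ) : ℂ))
      - Complex.exp (2 * Real.pi * Complex.I * ((c * t₁ : ℝ) : ℂ))) /
      (2 * Real.pi * Complex.I * ((c : ℝ) : ℂ))
  else ((t₂ - t₁ : ℝ) : ℂ)

/-- Sampling the continuous-time AFDM chirp subcarrier at the Nyquist interval `Δt`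
recovers the discrete-time chirp subcarrier: for `m, n ∈ {0,…,N−1}`,
`φ_m(n·Δt) = exp(2πi(c₂·m² + c₁·n² + m·n/N))`, where `c₁ = C/(2N)`. -/
theorem sampling_recovers_discrete_chirp
    (N C : ℕ) (hN : 0 < N) (hNeven : Even N) (hC : 0 < C)
    (Δt : ℝ) (hΔt : 0 < Δt) (c₂ : ℝ) (m n : ℕ) (hm : m < N) (hn : n < N) :
    phi N C Δt c₂ m ((n : ℝ) * Δt) =
      Complex.exp (2 * Real.pi * Complex.I *
        ((c₂ * (m : ℝ) ^ 2 + ((C : ℝ) / (2 * (N : ℝ))) * (n : ℝ) ^ 2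
          + (m : ℝ) * (n : ℝ) / (N : ℝ) : ℝ) : ℂ)) := by
  have hNpos : (0:ℝ) < N := by exact_mod_cast hN
  have hcond : 0 ≤ (n:ℝ) * Δt ∧ (n:ℝ) * Δt < T N Δt := by
    constructor
    · positivity
    · unfold T
      have : (n:ℝ) < N := by exact_mod_cast hn
      nlinarith
  rw [phi, if_pos hcond]
  set q : ℤ := qm N C Δt m ((n:ℝ) * Δt) with hq
  set A : ℝ := c₂ * (m : ℝ) ^ 2 + ((C : ℝ) / (2 * (N : ℝ))) * (n : ℝ) ^ 2
          + (m : ℝ) * (n : ℝ) / (N : ℝ) with hA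
  have hphase : (c₂ * (m : ℝ) ^ 2 + ctil N C Δt * ((n:ℝ)*Δt) ^ 2
      + ((m : ℝ) / T N Δt) * ((n:ℝ)*Δt) - (q : ℝ) * ((n:ℝ)*Δt) / Δt)
      = A - ((q * n : ℤ) : ℝ) := by
    unfold ctil T
    rw [hA]
    push_cast
    field_simp
  rw [hphase]
  push_cast
  rw [mul_sub, Complex.exp_sub]
  have h1 : Complex.exp (2 * Real.pi * Complex.I * ((q:ℂ) * (n:ℂ))) = 1 := by
    have := Complex.exp_int_mul_two_pi_mul_I (q * n)
    rw [← this]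
    congr 1
    push_cast
    ring
  rw [h1, div_one]

end AFDM
end
end

section
/- For every m ∈ {0,…,N−1} and every t ∈ [0,T), the instantaneous frequency of the m-th AFDM chirp subcarrier satisfies 0 ≤ 2·c̃₁·t + m/T − q_m(t)/Δt < 1/Δt; that is, the instantaneous frequencies of all chirp subcarriers are confined within the band [0, B) with B = 1/Δt. -/
open MeasureTheory Complex Real

noncomputable section

namespace AFDM

variable (N C : ℕ) (Δt : ℝ)

/-- The instantaneous frequency `2·c̃₁·t + m/T − q_m(t)/Δt` of every AFDM chirp subcarrier
is confined within the band `[0, B)` with `B = 1/Δt`. -/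
theorem instantaneous_frequency_in_band
    (N C : ℕ) (hN : 0 < N) (hNeven : Even N) (hC : 0 < C)
    (Δt : ℝ) (hΔt : 0 < Δt) (m : ℕ) (hm : m < N) (t : ℝ)
    (ht0 : 0 ≤ t) (htT : t < T N Δt) :
    0 ≤ 2 * ctil N C Δt * t + (m : ℝ) / T N Δt - (qm N C Δt m t : ℝ) / Δt ∧
      2 * ctil N C Δt * t + (m : ℝ) / T N Δt - (qm N C Δt m t : ℝ) / Δt < 1 / Δt := by

  have hT : 0 < T N Δt := by
    have : (0:ℝ) < (N:ℝ) := by exact_mod_cast hN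
    simpa [AFDM.T] using mul_pos this hΔt
  have hCpos : (0:ℝ) < (C:ℝ) := by exact_mod_cast hC
  set x : ℝ := ((C:ℝ) * t + (m:ℝ) * Δt) / T N Δt with hx
  have hx0 : 0 ≤ x := by
    apply div_nonneg _ hT.le
    positivity
  have hxC : x < (C:ℝ) + 1 := by
    rw [hx, div_lt_iff₀ hT]
    have h1 : (C:ℝ) * t ≤ (C:ℝ) * T N Δt := by
      exact mul_le_mul_of_nonneg_left htT.le hCpos.le
    have h2 : (m:ℝ) * Δt < T N Δt := by
      have : (m:ℝ) < (N:ℝ) := by exact_mod_cast hm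
      calc (m:ℝ) * Δt < (N:ℝ) * Δt := by exact mul_lt_mul_of_pos_right this hΔt
        _ = T N Δt := rfl
    nlinarith
  have hfl0 : 0 ≤ ⌊x⌋ := Int.floor_nonneg.2 hx0
  have hflC : ⌊x⌋.toNat ≤ C := by
    have : ⌊x⌋ < (C:ℤ) + 1 := by
      have := Int.floor_le_floor hxC.le
      have h2 : ⌊x⌋ ≤ (C:ℤ) + 1 := by
        calc ⌊x⌋ ≤ ⌊(C:ℝ) + 1⌋ := Int.floor_le_floor hxC.le
          _ = (C:ℤ) + 1 := by
            rw [show ((C:ℝ) + 1) = (((C:ℤ)+1 : ℤ):ℝ) by push_cast; ring, Int.floor_intCast]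
      rcases lt_or_eq_of_le h2 with h | h
      · exact h
      · exfalso
        have : ((C:ℝ) + 1) ≤ x := by
          have := Int.floor_le x
          rw [h] at this; push_cast at this; linarith
        linarith
    omega
  have hqm : qm N C Δt m t = ⌊x⌋ := by
    have hset : (Finset.range (C+1)).filter (fun q => tp N C Δt m q ≤ t)
        = Finset.range (⌊x⌋.toNat + 1) := by
      ext q
      simp only [Finset.mem_filter, Finset.mem_range]
      constructor
      · rintro ⟨hq, htp⟩
        rcases Nat.eq_zero_or_pos q with rfl | hqpos
        · omega
        · have hqC : q ≤ C := by omega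
          have hq0 : q ≠ 0 := by omega
          have : tp N C Δt m q = q * T N Δt / C - m * Δt / C := by
            simp [tp, hq0, hqC]
          rw [this] at htp
          have hqx : (q:ℝ) ≤ x := by
            rw [hx, le_div_iff₀ hT]
            rw [sub_le_iff_le_add, div_le_iff₀ hCpos, add_mul,
              div_mul_cancel₀ _ (ne_of_gt hCpos)] at htp
            nlinarith
          have : (q:ℤ) ≤ ⌊x⌋ := Int.le_floor.2 (by exact_mod_cast hqx)
          omega
      · intro hq
        refine ⟨by omega, ?_⟩
        rcases Nat.eq_zero_or_pos q with rfl | hqpos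
        · simp [tp, ht0]
        · have hqC : q ≤ C := by omega
          have hq0 : q ≠ 0 := by omega
          have htpq : tp N C Δt m q = q * T N Δt / C - m * Δt / C := by
            simp [tp, hq0, hqC]
          rw [htpq]
          have hqx : (q:ℝ) ≤ x := by
            have : (q:ℤ) ≤ ⌊x⌋ := by omega
            calc (q:ℝ) ≤ (⌊x⌋:ℝ) := by exact_mod_cast this
              _ ≤ x := Int.floor_le x
          rw [hx, le_div_iff₀ hT] at hqx
          rw [sub_le_iff_le_add, div_le_iff₀ hCpos, add_mul,
            div_mul_cancel₀ _ (ne_of_gt hCpos)]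
          nlinarith
    simp only [qm, hset, Finset.card_range]
    omega
  have hkey : 2 * ctil N C Δt * t + (m : ℝ) / T N Δt - (qm N C Δt m t : ℝ) / Δt
      = (x - (⌊x⌋:ℝ)) / Δt := by
    rw [hqm, hx]
    have hTΔ : T N Δt = (N:ℝ) * Δt := rfl
    simp only [ctil, hTΔ]
    have hNpos : (0:ℝ) < (N:ℝ) := by exact_mod_cast hN
    field_simp
  rw [hkey]
  constructor
  · apply div_nonneg _ hΔt.le
    linarith [Int.floor_le x]
  · rw [div_lt_div_iff₀ hΔt hΔt]
    have := Int.lt_floor_add_one x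
    nlinarith


end AFDM
end
end

section
/- Let m ∈ {0,…,N−1}, k ∈ {0,…,C−1}, and let τ satisfy k·T_SC ≤ τ < k·T_SC + min{T_SC − t_{m,1}, t_{m,1}}. Then: (i) for every i ∈ {0,…,C−k−1} and every t ∈ [t_{m,i} + τ, t_{m,i+k+1}), q_m(t) − q_m(t−τ) = k; (ii) for every i ∈ {0,…,C−k−1} and every t ∈ [t_{m,i+k+1}, t_{m,i+1} + τ), q_m(t) − q_m(t−τ) = k + 1; (iii) for every t ∈ [t_{m,C−k} + τ, T), q_m(t) − q_m(t−τ) = k. (This is the frequency-alignment step lemma: the wrapping-index difference takes exactly the two values k and k+1, on the frequency-aligned and frequency-misaligned sub-intervals respectively.) -/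
open MeasureTheory Complex Real

noncomputable section

namespace AFDM

variable (N C : ℕ) (Δt : ℝ)

lemma tp_zero (m : ℕ) : tp N C Δt m 0 = 0 := by simp [tp]

lemma tp_mid {q : ℕ} (hq1 : q ≠ 0) (hq2 : q ≤ C) (m : ℕ) :
    tp N C Δt m q = q * TSC N C Δt - m * Δt / C := by
  simp only [tp, if_neg hq1, if_pos hq2, TSC]
  ring

lemma tp_top {q : ℕ} (hq : C < q) (m : ℕ) : tp N C Δt m q = T N Δt := by
  simp only [tp]
  rw [if_neg (by omega), if_neg (by omega)]

lemma tp_mono (hΔt : 0 < Δt) {m : ℕ} (hm : m ≤ N) {q q' : ℕ} (h : q ≤ q') :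
    tp N C Δt m q ≤ tp N C Δt m q' := by
  have hT0 : 0 ≤ T N Δt := by
    unfold T; positivity
  rcases Nat.eq_zero_or_pos q with hq0 | hq0
  · subst hq0
    rw [tp_zero]
    rcases Nat.eq_zero_or_pos q' with hq0' | hq0'
    · subst hq0'; rw [tp_zero]
    · rcases le_or_gt q' C with hqC | hqC
      · rw [tp_mid N C Δt (by omega) hqC m]
        have hC0 : (0:ℝ) < C := by exact_mod_cast (lt_of_lt_of_le hq0' hqC)
        have h1 : (m:ℝ) ≤ (q':ℝ) * N := by
          exact_mod_cast Nat.le_trans hm (Nat.le_mul_of_pos_left N hq0')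
        have h2 : (m:ℝ) * Δt ≤ (q':ℝ) * (N * Δt) := by nlinarith
        have hrw : (q':ℝ) * TSC N C Δt - (m:ℝ) * Δt / C
            = ((q':ℝ) * (N * Δt) - (m:ℝ) * Δt) / C := by
          unfold TSC T; ring
        rw [hrw]
        apply div_nonneg (by linarith) hC0.le
      · rw [tp_top N C Δt hqC m]; exact hT0
  · rcases le_or_gt q C with hqC | hqC
    · rcases le_or_gt q' C with hqC' | hqC'
      · rw [tp_mid N C Δt (by omega) hqC m, tp_mid N C Δt (by omega) hqC' m]
        have hTs0 : 0 ≤ TSC N C Δt := by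
          unfold TSC; positivity
        have hqq : (q:ℝ) ≤ q' := by exact_mod_cast h
        nlinarith
      · rw [tp_mid N C Δt (by omega) hqC m, tp_top N C Δt hqC' m]
        have hC0 : (0:ℝ) < C := by exact_mod_cast lt_of_lt_of_le hq0 hqC
        have hq : (q:ℝ) ≤ C := by exact_mod_cast hqC
        have hrw : (q:ℝ) * TSC N C Δt - (m:ℝ) * Δt / C
            = ((q:ℝ) * (N * Δt) - (m:ℝ) * Δt) / C := by
          unfold TSC T; ring
        rw [hrw, div_le_iff₀ hC0]
        unfold T
        have hm0 : 0 ≤ (m:ℝ) * Δt := by positivity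
        have hNΔ : (0:ℝ) ≤ (N:ℝ) * Δt := by positivity
        nlinarith [mul_le_mul_of_nonneg_right hq hNΔ]
    · rw [tp_top N C Δt hqC m, tp_top N C Δt (lt_of_lt_of_le hqC h) m]

lemma qm_eq (hΔt : 0 < Δt) {m : ℕ} (hm : m ≤ N) {j : ℕ} (hj : j ≤ C)
    {t : ℝ} (h1 : tp N C Δt m j ≤ t) (h2 : t < tp N C Δt m (j + 1)) :
    qm N C Δt m t = j := by
  have hfil : (Finset.range (C + 1)).filter (fun q => tp N C Δt m q ≤ t)
      = Finset.range (j + 1) := by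
    ext q
    simp only [Finset.mem_filter, Finset.mem_range]
    constructor
    · rintro ⟨hq, hle⟩
      by_contra hc
      push_neg at hc
      exact absurd (le_trans (tp_mono N C Δt hΔt hm hc) hle) (not_le.mpr h2)
    · intro hq
      exact ⟨by omega, le_trans (tp_mono N C Δt hΔt hm (by omega : q ≤ j)) h1⟩
  unfold qm
  rw [hfil, Finset.card_range]
  push_cast
  ring

/-- Frequency-alignment step lemma: for `τ` in the `k`-th subchirp window, the
wrapping-index difference `q_m(t) − q_m(t−τ)` takes exactly the two values `k` and `k+1`,
on the frequency-aligned and frequency-misaligned sub-intervals respectively. -/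
theorem wrapping_index_difference
    (N C : ℕ) (hN : 0 < N) (hNeven : Even N) (hC : 0 < C)
    (Δt : ℝ) (hΔt : 0 < Δt) (m k : ℕ) (hm : m < N) (hk : k < C) (τ : ℝ)
    (hτ1 : (k : ℝ) * TSC N C Δt ≤ τ)
    (hτ2 : τ < (k : ℝ) * TSC N C Δt + min (TSC N C Δt - tp N C Δt m 1) (tp N C Δt m 1)) :
    (∀ i : ℕ, i ≤ C - k - 1 → ∀ t : ℝ,
        tp N C Δt m i + τ ≤ t → t < tp N C Δt m (i + k + 1) →
        qm N C Δt m t - qm N C Δt m (t - τ) = (k : ℤ)) ∧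
      (∀ i : ℕ, i ≤ C - k - 1 → ∀ t : ℝ,
        tp N C Δt m (i + k + 1) ≤ t → t < tp N C Δt m (i + 1) + τ →
        qm N C Δt m t - qm N C Δt m (t - τ) = (k : ℤ) + 1) ∧
      (∀ t : ℝ, tp N C Δt m (C - k) + τ ≤ t → t < T N Δt →
        qm N C Δt m t - qm N C Δt m (t - τ) = (k : ℤ)) := by
  have hmN : m ≤ N := hm.le
  have hCR : (0:ℝ) < C := by exact_mod_cast hC
  have hNR : (0:ℝ) < N := by exact_mod_cast hN
  have hTs : 0 < TSC N C Δt := by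
    unfold TSC T
    exact div_pos (mul_pos hNR hΔt) hCR
  have he0 : 0 ≤ (m:ℝ) * Δt / C := by positivity
  have heTs : (m:ℝ) * Δt / C < TSC N C Δt := by
    unfold TSC T
    rw [div_lt_div_iff₀ hCR hCR]
    have hmR : (m:ℝ) < N := by exact_mod_cast hm
    have := mul_lt_mul_of_pos_right (mul_lt_mul_of_pos_right hmR hΔt) hCR
    linarith
  have ht1 : tp N C Δt m 1 = TSC N C Δt - (m:ℝ) * Δt / C := by
    rw [tp_mid N C Δt one_ne_zero hC m]; push_cast; ring
  rw [ht1] at hτ2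
  have hd1 : τ < (k:ℝ) * TSC N C Δt + (m:ℝ) * Δt / C := by
    have h := min_le_left (TSC N C Δt - (TSC N C Δt - (m:ℝ) * Δt / C))
      (TSC N C Δt - (m:ℝ) * Δt / C)
    linarith
  have hd2 : τ < (k:ℝ) * TSC N C Δt + (TSC N C Δt - (m:ℝ) * Δt / C) := by
    have h := min_le_right (TSC N C Δt - (TSC N C Δt - (m:ℝ) * Δt / C))
      (TSC N C Δt - (m:ℝ) * Δt / C)
    linarith
  have hτ0 : 0 ≤ τ := le_trans (by positivity) hτ1
  have hTeq : T N Δt = (C:ℝ) * TSC N C Δt := by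
    unfold TSC; field_simp
  have hU : ∀ j : ℕ, j ≤ C → tp N C Δt m j ≤ (j:ℝ) * TSC N C Δt := by
    intro j hj
    rcases Nat.eq_zero_or_pos j with h0 | h0
    · subst h0; rw [tp_zero]; simp
    · rw [tp_mid N C Δt (by omega) hj m]; linarith
  have hL : ∀ j : ℕ, j ≤ C + 1 → (j:ℝ) * TSC N C Δt - TSC N C Δt ≤ tp N C Δt m j := by
    intro j hj
    rcases Nat.eq_zero_or_pos j with h0 | h0
    · subst h0; rw [tp_zero]; push_cast; nlinarith
    · rcases le_or_gt j C with hjC | hjC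
      · rw [tp_mid N C Δt (by omega) hjC m]; linarith [heTs]
      · have hje : j = C + 1 := by omega
        subst hje
        rw [tp_top N C Δt (by omega) m, hTeq]
        push_cast
        linarith
  have hD : ∀ i j : ℕ, i ≤ j → j ≤ C →
      tp N C Δt m j ≤ tp N C Δt m i + ((j:ℝ) - (i:ℝ)) * TSC N C Δt := by
    intro i j hij hjC
    rcases Nat.eq_zero_or_pos i with h0 | h0
    · subst h0
      rw [tp_zero]
      have := hU j hjC
      push_cast
      linarith
    · rw [tp_mid N C Δt (by omega) (le_trans hij hjC) m,
        tp_mid N C Δt (by omega) hjC m]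
      have hijR : (i:ℝ) ≤ j := by exact_mod_cast hij
      nlinarith
  refine ⟨?_, ?_, ?_⟩
  · -- part (i)
    intro i hi t htl htu
    have hik : i + k + 1 ≤ C := by omega
    have hq1 : qm N C Δt m t = ((i + k : ℕ) : ℤ) := by
      apply qm_eq N C Δt hΔt hmN (show i + k ≤ C by omega)
      · have h := hD i (i + k) (by omega) (by omega)
        push_cast at h
        linarith
      · exact htu
    have hq2 : qm N C Δt m (t - τ) = (i : ℤ) := by
      apply qm_eq N C Δt hΔt hmN (show i ≤ C by omega)
      · linarith
      · have h := hD (i + 1) (i + k + 1) (by omega) hik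
        push_cast at h
        linarith
    rw [hq1, hq2]; push_cast; ring
  · -- part (ii)
    intro i hi t htl htu
    have hik : i + k + 1 ≤ C := by omega
    have hmid1 : tp N C Δt m (i + 1) = ((i:ℝ) + 1) * TSC N C Δt - (m:ℝ) * Δt / C := by
      rw [tp_mid N C Δt (by omega) (by omega) m]; push_cast; ring
    have hmid2 : tp N C Δt m (i + k + 1)
        = ((i:ℝ) + (k:ℝ) + 1) * TSC N C Δt - (m:ℝ) * Δt / C := by
      rw [tp_mid N C Δt (by omega) hik m]; push_cast; ring
    have hq1 : qm N C Δt m t = ((i + k + 1 : ℕ) : ℤ) := by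
      apply qm_eq N C Δt hΔt hmN hik
      · exact htl
      · have h := hL (i + k + 1 + 1) (by omega)
        push_cast at h
        linarith [hmid1, hd1]
    have hq2 : qm N C Δt m (t - τ) = (i : ℤ) := by
      apply qm_eq N C Δt hΔt hmN (show i ≤ C by omega)
      · have h := hU i (by omega)
        linarith [hmid2, hd2]
      · linarith
    rw [hq1, hq2]; push_cast; ring
  · -- part (iii)
    intro t htl htu
    have hq1 : qm N C Δt m t = (C : ℤ) := by
      apply qm_eq N C Δt hΔt hmN le_rfl
      · have h := hD (C - k) C (by omega) le_rfl
        push_cast [Nat.cast_sub hk.le] at h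
        linarith
      · rw [tp_top N C Δt (by omega) m]; exact htu
    have hq2 : qm N C Δt m (t - τ) = ((C - k : ℕ) : ℤ) := by
      apply qm_eq N C Δt hΔt hmN (show C - k ≤ C by omega)
      · linarith
      · have h := hL (C - k + 1) (by omega)
        push_cast [Nat.cast_sub hk.le] at h
        have hTt : t < (C:ℝ) * TSC N C Δt := by rw [← hTeq]; exact htu
        linarith
    rw [hq1, hq2]
    push_cast [Nat.cast_sub hk.le]
    ring

end AFDM
end
end
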